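/- Let α be a simple multisegment. For any multisegment β with α ≤ β and α̃ ≤ β̃ (where ˜ denotes the Mœglin–Waldspurger dual), we have α = β. -/

import Mathlib

/-- A segment `[b, e]` is the set of consecutive integers `{b, b+1, ..., e}`,
recorded as the pair `(b, e)` of its base `b` and end `e`. -/
abbrev Segment : Type := ℤ × ℤ

/-- A multisegment is a finite multiset of segments. -/
abbrev Multisegment : Type := Multiset Segment

/-- The length `e - b + 1` of the segment `[b, e]`. -/
def Segment.len (Δ : Segment) : ℤ := Δ.2 - Δ.1 + 1

/-- `[b₁,e₁]` precedes `[b₂,e₂]` iff `b₁ < b₂`, `e₁ < e₂` and `b₂ ≤ e₁ + 1`. -/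
def Precedes (Δ₁ Δ₂ : Segment) : Prop :=
  Δ₁.1 < Δ₂.1 ∧ Δ₁.2 < Δ₂.2 ∧ Δ₂.1 ≤ Δ₁.2 + 1

instance (Δ₁ Δ₂ : Segment) : Decidable (Precedes Δ₁ Δ₂) := by
  unfold Precedes; infer_instance

/-- Every member of a multisegment is a genuine (nonempty) segment. -/
def IsMultisegment (α : Multisegment) : Prop := ∀ Δ ∈ α, Δ.1 ≤ Δ.2

/-- The rank `r_{i,j}`: the number of segments `[k,l]` of `α` with `k ≤ i` and `j ≤ l`. -/
def rank (α : Multisegment) (i j : ℤ) : ℕ :=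
  (α.filter fun Δ => Δ.1 ≤ i ∧ j ≤ Δ.2).card

/-- `n_α`: the number of segments of `α`, counted with multiplicity. -/
def nSeg (α : Multisegment) : ℕ := Multiset.card α

instance : Std.Commutative (fun a b : ℤ => max a b) := ⟨max_comm⟩
instance : Std.Associative (fun a b : ℤ => max a b) := ⟨max_assoc⟩

/-- `L_α`: the length of the longest segment of `α` (0 for the empty multisegment). -/
def Lmax (α : Multisegment) : ℤ := (α.map Segment.len).fold (fun a b => max a b) 0

/-- The support `∪_{Δ ∈ α} Δ` of a multisegment, as a finite set of integers. -/
noncomputable def supp (α : Multisegment) : Finset ℤ := α.toFinset.biUnion fun Δ => Finset.Icc Δ.1 Δ.2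

/-- `S_α`: the number of integers in `∪_{Δ ∈ α} Δ`. -/
noncomputable def Ssize (α : Multisegment) : ℕ := (supp α).card

/-- `c_α`: the number of interval components of `∪_{Δ ∈ α} Δ`
(counted via their left endpoints). -/
noncomputable def comp (α : Multisegment) : ℕ :=
  ((supp α).filter fun x => x - 1 ∉ supp α).card

/-! ### The Mœglin–Waldspurger algorithm -/

/-- Remove the end value from a segment, dropping it if it becomes empty. -/
def removeEnd (Δ : Segment) : Option Segment :=
  if Δ.1 ≤ Δ.2 - 1 then some (Δ.1, Δ.2 - 1) else none

/-- Among the segments of `l` with end value `m`, pick a shortest one (if any). -/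
def pickShortest (m : ℤ) (l : List Segment) : Option Segment :=
  (l.filter fun Δ => Δ.2 == m).foldl (fun acc Δ =>
    match acc with
    | none => some Δ
    | some Δ' => if Δ'.1 < Δ.1 then some Δ else some Δ') none

/-- Starting from a current segment `Δ`, greedily build the Mœglin–Waldspurger chain:
at each step choose a shortest segment preceding the current one whose end value is one
less.  Returns the chosen chain together with the unchosen segments. -/
def pickChain : ℕ → Segment → List Segment → List Segment × List Segment
  | 0, Δ, rest => ([Δ], rest)
  | n + 1, Δ, rest =>
    match pickShortest (Δ.2 - 1) (rest.filter fun Δ' => decide (Precedes Δ' Δ)) with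
    | none => ([Δ], rest)
    | some Δ' =>
      let p := pickChain n Δ' (rest.erase Δ')
      (Δ :: p.1, p.2)

/-- One iteration of the Mœglin–Waldspurger algorithm: returns the produced dual
segment `[m, e]` together with the multisegment `α'` left after removing the chosen
end values. -/
def mwIter (l : List Segment) : Option (Segment × List Segment) :=
  match (l.map fun Δ => Δ.2).max? with
  | none => none
  | some e =>
    match pickShortest e l with
    | none => none
    | some Δe =>
      let p := pickChain l.length Δe (l.erase Δe)
      some ((Δe.2 - ((p.1.length : ℤ) - 1), e), p.2 ++ p.1.filterMap removeEnd)

/-- The total number of integers (with multiplicity) in a list of segments. -/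
def totalSize (l : List Segment) : ℕ := (l.map fun Δ => (Δ.2 - Δ.1 + 1).toNat).sum

/-- Fueled iteration of the Mœglin–Waldspurger algorithm. -/
def mwAux : ℕ → List Segment → List Segment
  | 0, _ => []
  | n + 1, l =>
    match mwIter l with
    | none => []
    | some (Δ', l') => Δ' :: mwAux n l'

/-- The Mœglin–Waldspurger dual `α̃` of a multisegment `α`. -/
noncomputable def dual (α : Multisegment) : Multisegment :=
  (mwAux (totalSize α.toList) α.toList : List Segment)

/-! ### The partial order on multisegments -/

/-- An elementary move on multisegments: either the union–intersection move
(replace distinct overlapping `Δ₁, Δ₂` by `Δ₁ ∩ Δ₂` and `Δ₁ ∪ Δ₂`) or the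
conjunction move (replace two disjoint adjacent segments by their union). -/
inductive MoveStep : Multisegment → Multisegment → Prop
  | unionInter (α : Multisegment) (Δ₁ Δ₂ : Segment)
      (hmeet : max Δ₁.1 Δ₂.1 ≤ min Δ₁.2 Δ₂.2) (hne : Δ₁ ≠ Δ₂) :
      MoveStep (Δ₁ ::ₘ Δ₂ ::ₘ α)
        ((max Δ₁.1 Δ₂.1, min Δ₁.2 Δ₂.2) ::ₘ (min Δ₁.1 Δ₂.1, max Δ₁.2 Δ₂.2) ::ₘ α)
  | conj (α : Multisegment) (Δ₁ Δ₂ : Segment) (h : Δ₂.1 = Δ₁.2 + 1) :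
      MoveStep (Δ₁ ::ₘ Δ₂ ::ₘ α) ((Δ₁.1, Δ₂.2) ::ₘ α)

/-- The partial order `α ≤ β` on multisegments, generated by the elementary moves. -/
def mle (α β : Multisegment) : Prop := Relation.ReflTransGen MoveStep α β

/-- A ladder multisegment: the segments can be listed with strictly increasing
bases and strictly increasing ends. -/
def IsLadder (α : Multisegment) : Prop :=
  ∃ l : List Segment, (l : Multiset Segment) = α ∧
    l.Chain' fun Δ₁ Δ₂ => Δ₁.1 < Δ₂.1 ∧ Δ₁.2 < Δ₂.2

/-- `C_α`: the maximal number of (nonempty) components in a decomposition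
`α = ⊔ᵢ αᵢ` satisfying `α̃ = ⊔ᵢ α̃ᵢ`. -/
noncomputable def Cmax (α : Multisegment) : ℕ :=
  sSup {n | ∃ parts : Multiset Multisegment, Multiset.card parts = n ∧
    (∀ γ ∈ parts, γ ≠ 0) ∧ parts.sum = α ∧ (parts.map dual).sum = dual α}

/-- The simple multisegment `{[b,e], [b+1,e+1], ..., [b+n-1,e+n-1]}`. -/
def simpleMS (b e : ℤ) (n : ℕ) : Multisegment :=
  (Multiset.range n).map fun i => (b + i, e + i)

/-- The symmetric simple multisegment `{[-e,b], [-e+1,b+1], ..., [-b,e]}`. -/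
def symmSimple (b e : ℤ) : Multisegment :=
  (Multiset.range (e - b + 1).toNat).map fun i => (-e + i, b + i)

def Tval (γ : Multisegment) : ℤ := (γ.map Segment.len).sum
def Qval (γ : Multisegment) : ℤ := (γ.map (fun Δ => Segment.len Δ ^ 2)).sum

lemma move_valid {γ δ : Multisegment} (h : MoveStep γ δ) (hv : IsMultisegment γ) :
    IsMultisegment δ := by
  cases h with
  | unionInter α Δ₁ Δ₂ hmeet hne =>
    have h1 := hv Δ₁ (Multiset.mem_cons_self _ _)
    have h2 := hv Δ₂ (Multiset.mem_cons.2 (Or.inr (Multiset.mem_cons_self _ _)))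
    intro Δ hΔ
    rcases Multiset.mem_cons.1 hΔ with rfl | hΔ
    · simpa using hmeet
    rcases Multiset.mem_cons.1 hΔ with rfl | hΔ
    · simp only [] ; omega
    · exact hv Δ (Multiset.mem_cons.2 (Or.inr (Multiset.mem_cons.2 (Or.inr hΔ))))
  | conj α Δ₁ Δ₂ h =>
    have h1 := hv Δ₁ (Multiset.mem_cons_self _ _)
    have h2 := hv Δ₂ (Multiset.mem_cons.2 (Or.inr (Multiset.mem_cons_self _ _)))
    intro Δ hΔ
    rcases Multiset.mem_cons.1 hΔ with rfl | hΔ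
    · simp only [] ; omega
    · exact hv Δ (Multiset.mem_cons.2 (Or.inr (Multiset.mem_cons.2 (Or.inr hΔ))))

lemma move_T {γ δ : Multisegment} (h : MoveStep γ δ) : Tval δ = Tval γ := by
  cases h with
  | unionInter α Δ₁ Δ₂ hmeet hne =>
    simp only [Tval, Multiset.map_cons, Multiset.sum_cons, Segment.len]
    omega
  | conj α Δ₁ Δ₂ h =>
    simp only [Tval, Multiset.map_cons, Multiset.sum_cons, Segment.len]
    omega

lemma move_card {γ δ : Multisegment} (h : MoveStep γ δ) :
    Multiset.card δ ≤ Multiset.card γ := by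
  cases h <;> simp

lemma move_Q {γ δ : Multisegment} (h : MoveStep γ δ) (hv : IsMultisegment γ) :
    Qval γ ≤ Qval δ := by
  cases h with
  | unionInter α Δ₁ Δ₂ hmeet hne =>
    simp only [Qval, Multiset.map_cons, Multiset.sum_cons, Segment.len]
    rcases le_total Δ₁.1 Δ₂.1 with hb | hb <;> rcases le_total Δ₁.2 Δ₂.2 with he | he
    · rw [sup_eq_right.2 hb, inf_eq_left.2 hb, sup_eq_right.2 he, inf_eq_left.2 he]
      nlinarith [mul_nonneg (sub_nonneg.2 he) (sub_nonneg.2 hb)]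
    · rw [sup_eq_right.2 hb, inf_eq_left.2 hb, sup_eq_left.2 he, inf_eq_right.2 he]
      nlinarith []
    · rw [sup_eq_left.2 hb, inf_eq_right.2 hb, sup_eq_right.2 he, inf_eq_left.2 he]
    · rw [sup_eq_left.2 hb, inf_eq_right.2 hb, sup_eq_left.2 he, inf_eq_right.2 he]
      nlinarith [mul_nonneg (sub_nonneg.2 he) (sub_nonneg.2 hb)]
  | conj α Δ₁ Δ₂ h =>
    have h1 := hv Δ₁ (Multiset.mem_cons_self _ _)
    have h2 := hv Δ₂ (Multiset.mem_cons.2 (Or.inr (Multiset.mem_cons_self _ _)))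
    simp only [Qval, Multiset.map_cons, Multiset.sum_cons, Segment.len]
    nlinarith [h1, h2, h]

lemma move_Q_eq {γ δ : Multisegment} (h : MoveStep γ δ) (hv : IsMultisegment γ)
    (hq : Qval γ = Qval δ) : γ = δ := by
  cases h with
  | unionInter α Δ₁ Δ₂ hmeet hne =>
    simp only [Qval, Multiset.map_cons, Multiset.sum_cons, Segment.len] at hq
    rcases le_total Δ₁.1 Δ₂.1 with hb | hb <;> rcases le_total Δ₁.2 Δ₂.2 with he | he
    · rw [sup_eq_right.2 hb, inf_eq_left.2 hb, sup_eq_right.2 he, inf_eq_left.2 he] at hq ⊢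
      have key : (Δ₂.2 - Δ₁.2) * (Δ₂.1 - Δ₁.1) = 0 := by nlinarith [hq]
      rcases mul_eq_zero.1 key with hc | hc
      · have e2 : ((Δ₂.1 : ℤ), (Δ₁.2 : ℤ)) = Δ₂ := by rw [Prod.ext_iff]; exact ⟨rfl, by omega⟩
        have e1 : ((Δ₁.1 : ℤ), (Δ₂.2 : ℤ)) = Δ₁ := by rw [Prod.ext_iff]; exact ⟨rfl, by omega⟩
        rw [e1, e2, Multiset.cons_swap]
      · have e2 : ((Δ₂.1 : ℤ), (Δ₁.2 : ℤ)) = Δ₁ := by rw [Prod.ext_iff]; exact ⟨by omega, rfl⟩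
        have e1 : ((Δ₁.1 : ℤ), (Δ₂.2 : ℤ)) = Δ₂ := by rw [Prod.ext_iff]; exact ⟨by omega, rfl⟩
        rw [e1, e2]
    · rw [sup_eq_right.2 hb, inf_eq_left.2 hb, sup_eq_left.2 he, inf_eq_right.2 he,
        Prod.mk.eta, Prod.mk.eta, Multiset.cons_swap]
    · rw [sup_eq_left.2 hb, inf_eq_right.2 hb, sup_eq_right.2 he, inf_eq_left.2 he,
        Prod.mk.eta, Prod.mk.eta]
    · rw [sup_eq_left.2 hb, inf_eq_right.2 hb, sup_eq_left.2 he, inf_eq_right.2 he] at hq ⊢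
      have key : (Δ₁.2 - Δ₂.2) * (Δ₁.1 - Δ₂.1) = 0 := by nlinarith [hq]
      rcases mul_eq_zero.1 key with hc | hc
      · have e2 : ((Δ₁.1 : ℤ), (Δ₂.2 : ℤ)) = Δ₁ := by rw [Prod.ext_iff]; exact ⟨rfl, by omega⟩
        have e1 : ((Δ₂.1 : ℤ), (Δ₁.2 : ℤ)) = Δ₂ := by rw [Prod.ext_iff]; exact ⟨rfl, by omega⟩
        rw [e1, e2]
      · have e2 : ((Δ₁.1 : ℤ), (Δ₂.2 : ℤ)) = Δ₂ := by rw [Prod.ext_iff]; exact ⟨by omega, rfl⟩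
        have e1 : ((Δ₂.1 : ℤ), (Δ₁.2 : ℤ)) = Δ₁ := by rw [Prod.ext_iff]; exact ⟨by omega, rfl⟩
        rw [e1, e2, Multiset.cons_swap]
  | conj α Δ₁ Δ₂ h =>
    exfalso
    have h1 := hv Δ₁ (Multiset.mem_cons_self _ _)
    have h2 := hv Δ₂ (Multiset.mem_cons.2 (Or.inr (Multiset.mem_cons_self _ _)))
    simp only [Qval, Multiset.map_cons, Multiset.sum_cons, Segment.len] at hq
    nlinarith [h1, h2, h, hq]

lemma mle_props {γ β : Multisegment} (h : mle γ β) (hv : IsMultisegment γ) :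
    IsMultisegment β ∧ Qval γ ≤ Qval β ∧ Tval β = Tval γ ∧
      Multiset.card β ≤ Multiset.card γ := by
  induction h with
  | refl => exact ⟨hv, le_refl _, rfl, le_refl _⟩
  | tail hs hstep ih =>
    obtain ⟨ihv, ihq, iht, ihc⟩ := ih
    exact ⟨move_valid hstep ihv, ihq.trans (move_Q hstep ihv),
      (move_T hstep).trans iht, (move_card hstep).trans ihc⟩

lemma mle_Q_eq {γ β : Multisegment} (h : mle γ β) (hv : IsMultisegment γ)
    (hq : Qval γ = Qval β) : γ = β := by
  induction h using Relation.ReflTransGen.head_induction_on with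
  | refl => rfl
  | head hstep hrest ih =>
    rename_i a c
    have h1 : Qval a ≤ Qval c := move_Q hstep hv
    have hvc : IsMultisegment c := move_valid hstep hv
    have h2 : Qval c ≤ Qval β := (mle_props hrest hvc).2.1
    have : a = c := move_Q_eq hstep hv (by omega)
    subst this
    exact ih hvc hq

/-- multiset version of totalSize -/
def TS (s : Multisegment) : ℕ := (s.map fun Δ => (Δ.2 - Δ.1 + 1).toNat).sum

lemma totalSize_eq_TS (l : List Segment) : totalSize l = TS (↑l) := rfl

lemma Lmax_nonneg (s : Multisegment) : 0 ≤ Lmax s := by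
  induction s using Multiset.induction with
  | empty => simp [Lmax]
  | cons a t ih =>
    rw [Lmax, Multiset.map_cons, Multiset.fold_cons_left]
    rw [Lmax] at ih
    exact le_max_of_le_right ih

lemma le_Lmax {s : Multisegment} {Δ : Segment} (h : Δ ∈ s) : Segment.len Δ ≤ Lmax s := by
  induction s using Multiset.induction with
  | empty => simp at h
  | cons a t ih =>
    rw [Lmax, Multiset.map_cons, Multiset.fold_cons_left]
    rcases Multiset.mem_cons.1 h with rfl | h
    · exact le_max_left _ _
    · exact le_max_of_le_right (ih h)

lemma Lmax_le {s : Multisegment} {c : ℤ} (h0 : 0 ≤ c)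
    (h : ∀ Δ ∈ s, Segment.len Δ ≤ c) : Lmax s ≤ c := by
  induction s using Multiset.induction with
  | empty => simpa [Lmax]
  | cons a t ih =>
    rw [Lmax, Multiset.map_cons, Multiset.fold_cons_left]
    exact max_le (h a (Multiset.mem_cons_self _ _))
      (ih fun Δ hΔ => h Δ (Multiset.mem_cons.2 (Or.inr hΔ)))

lemma pickShortest_mem {m : ℤ} {l : List Segment} {Δ : Segment}
    (h : pickShortest m l = some Δ) : Δ ∈ l := by
  unfold pickShortest at h
  have key : ∀ (t : List Segment) (acc : Option Segment),
      (∀ Δ', acc = some Δ' → Δ' ∈ l) → (∀ Δ' ∈ t, Δ' ∈ l) →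
      ∀ Δ', t.foldl (fun acc Δ =>
        match acc with
        | none => some Δ
        | some Δ' => if Δ'.1 < Δ.1 then some Δ else some Δ') acc = some Δ' → Δ' ∈ l := by
    intro t
    induction t with
    | nil => intro acc hacc _ Δ' h'; exact hacc Δ' h'
    | cons a t ih =>
      intro acc hacc ht Δ' h'
      refine ih _ ?_ (fun x hx => ht x (List.mem_cons_of_mem _ hx)) Δ' h'
      intro Δ'' h''
      match acc with
      | none => simp at h''; subst h''; exact ht a List.mem_cons_self
      | some Δ₀ =>
        simp only [] at h''
        split at h''
        · simp at h''; subst h''; exact ht a List.mem_cons_self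
        · simp at h''; subst h''; exact hacc _ rfl
  exact key _ none (by simp) (fun Δ' h' => (List.mem_filter.1 h').1) Δ h

lemma pickShortest_isSome {m : ℤ} {l : List Segment} {Δ₀ : Segment}
    (hΔ₀ : Δ₀ ∈ l) (hm : Δ₀.2 = m) : ∃ Δ, pickShortest m l = some Δ := by
  unfold pickShortest
  have hf : Δ₀ ∈ l.filter fun Δ => Δ.2 == m := by
    rw [List.mem_filter]; exact ⟨hΔ₀, by simp [hm]⟩
  have key : ∀ (t : List Segment) (acc : Option Segment), t ≠ [] ∨ acc.isSome →
      ∃ Δ, t.foldl (fun acc Δ =>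
        match acc with
        | none => some Δ
        | some Δ' => if Δ'.1 < Δ.1 then some Δ else some Δ') acc = some Δ := by
    intro t
    induction t with
    | nil =>
      intro acc h
      rcases h with h | h
      · simp at h
      · obtain ⟨Δ, hΔ⟩ := Option.isSome_iff_exists.1 h; exact ⟨Δ, hΔ⟩
    | cons a t ih =>
      intro acc _
      refine ih _ (Or.inr ?_)
      match acc with
      | none => simp
      | some Δ₀ => simp only []; split <;> simp
  exact key _ none (Or.inl (by rintro h; rw [h] at hf; simp at hf))

lemma coe_list_erase {l : List Segment} {a : Segment} (h : a ∈ l) :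
    a ::ₘ ((l.erase a : List Segment) : Multisegment) = ↑l := by
  induction l with
  | nil => simp at h
  | cons x t ih =>
    by_cases hax : x = a
    · subst hax
      rw [List.erase_cons_head]
      exact (Multiset.cons_coe _ _)
    · rw [List.erase_cons_tail (by simpa using hax)]
      have h' : a ∈ t := by
        rcases List.mem_cons.1 h with h | h
        · exact absurd h.symm hax
        · exact h
      rw [← Multiset.cons_coe, ← Multiset.cons_coe, Multiset.cons_swap, ih h']

lemma pickChain_spec (fuel : ℕ) (Δ : Segment) (rest : List Segment) :
    ((pickChain fuel Δ rest).1 : Multiset Segment) + ((pickChain fuel Δ rest).2 : Multiset Segment)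
      = Δ ::ₘ (↑rest : Multiset Segment) ∧ (pickChain fuel Δ rest).1 ≠ [] := by
  induction fuel generalizing Δ rest with
  | zero => simp [pickChain]
  | succ n ih =>
    rw [pickChain]
    cases hps : pickShortest (Δ.2 - 1) (rest.filter fun Δ' => decide (Precedes Δ' Δ)) with
    | none => simp
    | some Δ' =>
      have hmem : Δ' ∈ rest := (List.mem_filter.1 (pickShortest_mem hps)).1
      obtain ⟨ih1, ih2⟩ := ih Δ' (rest.erase Δ')
      constructor
      · simp only [← Multiset.cons_coe, Multiset.cons_add]
        rw [ih1, coe_list_erase hmem]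
      · simp

lemma mwIter_spec {l : List Segment} (hl : l ≠ []) :
    ∃ (seg : Segment) (l' : List Segment) (c : List Segment) (r : List Segment), mwIter l = some (seg, l') ∧
      (↑c + ↑r : Multisegment) = ↑l ∧ c ≠ [] ∧
      (↑l' : Multisegment) = ↑r + ↑(c.filterMap removeEnd) := by
  have hmap : l.map (fun Δ => Δ.2) ≠ [] := by simpa using hl
  cases hm : (l.map fun Δ => Δ.2).max? with
  | none => exact absurd (List.max?_eq_none_iff.1 hm) hmap
  | some e =>
    have he : e ∈ l.map fun Δ => Δ.2 := List.max?_mem hm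
    obtain ⟨Δ₀, hΔ₀, hΔ₀e⟩ := List.mem_map.1 he
    obtain ⟨Δe, hΔe⟩ := pickShortest_isSome hΔ₀ hΔ₀e
    have hΔemem : Δe ∈ l := pickShortest_mem hΔe
    obtain ⟨hc1, hc2⟩ := pickChain_spec l.length Δe (l.erase Δe)
    refine ⟨(Δe.2 - (((pickChain l.length Δe (l.erase Δe)).1.length : ℤ) - 1), e),
      (pickChain l.length Δe (l.erase Δe)).2 ++
        (pickChain l.length Δe (l.erase Δe)).1.filterMap removeEnd,
      (pickChain l.length Δe (l.erase Δe)).1,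
      (pickChain l.length Δe (l.erase Δe)).2, ?_, ?_, hc2, ?_⟩
    · simp only [mwIter, hm, hΔe]
    · rw [hc1, coe_list_erase hΔemem]
    · simp

lemma removeEnd_some {a b : Segment} (h : removeEnd a = some b) :
    b = (a.1, a.2 - 1) ∧ a.1 ≤ a.2 - 1 := by
  unfold removeEnd at h
  split at h
  · exact ⟨(Option.some_inj.1 h).symm, by assumption⟩
  · simp at h

lemma TS_coe (l : List Segment) : TS ↑l = totalSize l := rfl

lemma TS_add (s t : Multisegment) : TS (s + t) = TS s + TS t := by
  simp [TS, Multiset.map_add, Multiset.sum_add]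

lemma TS_filterMap_removeEnd (c : List Segment) (hv : ∀ Δ ∈ c, Δ.1 ≤ Δ.2) :
    TS ↑(c.filterMap removeEnd) + c.length = TS ↑c := by
  induction c with
  | nil => simp [TS]
  | cons a t ih =>
    have ha := hv a List.mem_cons_self
    have ih' := ih fun Δ hΔ => hv Δ (List.mem_cons_of_mem _ hΔ)
    rw [List.filterMap_cons]
    cases hre : removeEnd a with
    | none =>
      have : ¬ a.1 ≤ a.2 - 1 := by
        unfold removeEnd at hre; by_contra hcon; simp [hcon] at hre
      simp only [← Multiset.cons_coe, TS, Multiset.map_cons, Multiset.sum_cons,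
        List.length_cons] at *
      have : (a.2 - a.1 + 1).toNat = 1 := by omega
      omega
    | some b =>
      obtain ⟨rfl, hab⟩ := removeEnd_some hre
      simp only [← Multiset.cons_coe, TS, Multiset.map_cons, Multiset.sum_cons,
        List.length_cons] at *
      have h1 : (a.2 - 1 - a.1 + 1).toNat + 1 = (a.2 - a.1 + 1).toNat := by omega
      omega

lemma totalSize_zero {l : List Segment} (hv : IsMultisegment ↑l) (h : totalSize l = 0) :
    l = [] := by
  cases l with
  | nil => rfl
  | cons a t =>
    exfalso
    have ha : a.1 ≤ a.2 := hv a (by simp)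
    simp only [totalSize, List.map_cons, List.sum_cons] at h
    omega

lemma lmax_le_mwAux_length : ∀ (fuel : ℕ) (l : List Segment), IsMultisegment ↑l →
    totalSize l ≤ fuel → Lmax ↑l ≤ ((mwAux fuel l).length : ℤ) := by
  intro fuel
  induction fuel with
  | zero =>
    intro l hv hts
    rw [totalSize_zero hv (Nat.le_zero.1 hts)]
    simp [Lmax, mwAux]
  | succ n ih =>
    intro l hv hts
    by_cases hl : l = []
    · subst hl
      have : Lmax (↑([] : List Segment)) = 0 := by simp [Lmax]
      rw [this]
      exact Int.natCast_nonneg _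
    · obtain ⟨seg, l', c, r, hiter, hcr, hc, hl'⟩ := mwIter_spec hl
      have hmemc : ∀ Δ ∈ c, Δ.1 ≤ Δ.2 := by
        intro Δ hΔ
        exact hv Δ (by rw [← hcr]; exact Multiset.mem_add.2 (Or.inl (by exact_mod_cast hΔ)))
      have hvl' : IsMultisegment ↑l' := by
        rw [hl']
        intro Δ hΔ
        rcases Multiset.mem_add.1 hΔ with hΔ | hΔ
        · exact hv Δ (by rw [← hcr]; exact Multiset.mem_add.2 (Or.inr hΔ))
        · obtain ⟨a, ha, hre⟩ := List.mem_filterMap.1 (by exact_mod_cast hΔ)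
          obtain ⟨rfl, hab⟩ := removeEnd_some hre
          simpa using hab
      have hts' : totalSize l' ≤ n := by
        have h1 : TS ↑l' = TS ↑r + TS ↑(c.filterMap removeEnd) := by rw [hl', TS_add]
        have h2 := TS_filterMap_removeEnd c hmemc
        have h3 : TS ↑c + TS ↑r = totalSize l := by rw [← TS_add, hcr, TS_coe]
        have h4 : 1 ≤ c.length := by
          cases c with
          | nil => exact absurd rfl hc
          | cons _ _ => simp
        rw [← TS_coe]
        omega
      have hLm : Lmax ↑l ≤ Lmax ↑l' + 1 := by
        refine Lmax_le (by linarith [Lmax_nonneg ↑l']) ?_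
        intro Δ hΔ
        rw [← hcr] at hΔ
        rcases Multiset.mem_add.1 hΔ with hΔ | hΔ
        · -- Δ ∈ c
          by_cases hΔ2 : Δ.1 ≤ Δ.2 - 1
          · have hre : removeEnd Δ = some (Δ.1, Δ.2 - 1) := by
              unfold removeEnd; rw [if_pos hΔ2]
            have hmem : (Δ.1, Δ.2 - 1) ∈ (↑l' : Multisegment) := by
              rw [hl']
              refine Multiset.mem_add.2 (Or.inr ?_)
              exact_mod_cast List.mem_filterMap.2 ⟨Δ, by exact_mod_cast hΔ, hre⟩
            have := le_Lmax hmem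
            simp only [Segment.len] at this ⊢
            omega
          · have : Segment.len Δ ≤ 1 := by simp only [Segment.len]; omega
            linarith [Lmax_nonneg ↑l']
        · have : Δ ∈ (↑l' : Multisegment) := by
            rw [hl']; exact Multiset.mem_add.2 (Or.inl hΔ)
          linarith [le_Lmax this]
      have hrec := ih l' hvl' hts'
      have : mwAux (n + 1) l = seg :: mwAux n l' := by
        simp only [mwAux, hiter]
      rw [this, List.length_cons]
      push_cast
      linarith

lemma filter_map_range_singleton (f : ℕ → Segment) (p : Segment → Bool) (n j : ℕ)
    (hj : j < n) (h : ∀ i < n, p (f i) = true ↔ i = j) :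
    Multiset.filter (fun x => p x = true) ((Multiset.range n).map f) = {f j} := by
  induction n with
  | zero => omega
  | succ k ih =>
    rw [Multiset.range_succ, Multiset.map_cons]
    by_cases hjk : j = k
    · subst hjk
      rw [Multiset.filter_cons_of_pos (p := fun x => p x = true) _ ((h j (by omega)).2 rfl)]
      have : Multiset.filter (fun x => p x = true) ((Multiset.range j).map f) = 0 := by
        rw [Multiset.filter_eq_nil]
        intro a ha
        obtain ⟨i, hi, rfl⟩ := Multiset.mem_map.1 ha
        rw [Multiset.mem_range] at hi
        rw [h i (by omega)]
        omega
      rw [this]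
      rfl
    · rw [Multiset.filter_cons_of_neg (p := fun x => p x = true) _
        (by show ¬(p (f k) = true); rw [h k (by omega)]; exact hjk ∘ Eq.symm)]
      exact ih (by omega) (fun i hi => h i (by omega))

lemma filter_singleton_list {l : List Segment} {p : Segment → Bool} {Δ₀ : Segment}
    (h : Multiset.filter (fun x => p x = true) (↑l) = {Δ₀}) : l.filter p = [Δ₀] := by
  apply Multiset.coe_eq_singleton.1
  rw [← h]
  simp [Multiset.filter_coe]

lemma pickShortest_of_singleton {m : ℤ} {l : List Segment} {Δ₀ : Segment}
    (h : l.filter (fun Δ => Δ.2 == m) = [Δ₀]) : pickShortest m l = some Δ₀ := by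
  unfold pickShortest
  rw [h]
  rfl

lemma pickChain_simple (b e' : ℤ) (hbe : b ≤ e') : ∀ (k fuel : ℕ), k ≤ fuel →
    ∀ rest : List Segment,
    (↑rest : Multisegment) = (Multiset.range k).map (fun i : ℕ => ((b + (i:ℤ), e' + (i:ℤ)) : Segment)) →
    ((pickChain fuel ((b + (k:ℤ), e' + (k:ℤ)) : Segment) rest).1 : Multisegment)
        = (Multiset.range (k+1)).map (fun i : ℕ => ((b + (i:ℤ), e' + (i:ℤ)) : Segment)) ∧
      (pickChain fuel ((b + (k:ℤ), e' + (k:ℤ)) : Segment) rest).2 = [] := by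
  intro k
  induction k with
  | zero =>
    intro fuel _ rest hrest
    have : rest = [] := by
      simpa [Multiset.coe_eq_zero] using hrest
    subst this
    cases fuel with
    | zero => simp [pickChain, Multiset.range_succ]
    | succ m =>
      rw [pickChain]
      simp only [List.filter_nil]
      rw [show ∀ m : ℤ, pickShortest m ([] : List Segment) = none from fun _ => rfl]
      simp [Multiset.range_succ]
  | succ k ih =>
    intro fuel hfuel rest hrest
    cases fuel with
    | zero => omega
    | succ m =>
      rw [pickChain]
      have hsing : (rest.filter fun Δ' => decide (Precedes Δ'
            ((b + ((k+1:ℕ):ℤ), e' + ((k+1:ℕ):ℤ)) : Segment))).filter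
          (fun Δ' => Δ'.2 == ((b + ((k+1:ℕ):ℤ), e' + ((k+1:ℕ):ℤ)) : Segment).2 - 1)
            = [((b + (k:ℤ), e' + (k:ℤ)) : Segment)] := by
        rw [List.filter_filter]
        apply filter_singleton_list
        rw [hrest]
        exact filter_map_range_singleton (fun i : ℕ => ((b + (i:ℤ), e' + (i:ℤ)) : Segment))
          _ _ k (by omega) (by
            intro i hi
            simp only [Bool.and_eq_true, decide_eq_true_eq, beq_iff_eq, Precedes]
            constructor
            · intro hp
              have := hp.1
              push_cast at this
              omega
            · rintro rfl
              refine ⟨by push_cast; ring,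
                decide_eq_true (show Precedes ((b + (i:ℤ), e' + (i:ℤ)) : Segment)
                  ((b + ((i+1:ℕ):ℤ), e' + ((i+1:ℕ):ℤ)) : Segment) from
                  ⟨by push_cast; omega, by push_cast; omega, by push_cast; omega⟩)⟩)
      have hps := pickShortest_of_singleton hsing
      rw [hps]
      have hmem : ((b + (k:ℤ), e' + (k:ℤ)) : Segment) ∈ rest := by
        have : ((b + (k:ℤ), e' + (k:ℤ)) : Segment) ∈ (↑rest : Multisegment) := by
          rw [hrest]
          exact Multiset.mem_map.2 ⟨k, Multiset.mem_range.2 (by omega), rfl⟩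
        exact_mod_cast this
      have herase : (↑(rest.erase ((b + (k:ℤ), e' + (k:ℤ)) : Segment)) : Multisegment)
          = (Multiset.range k).map (fun i : ℕ => ((b + (i:ℤ), e' + (i:ℤ)) : Segment)) := by
        have h1 := coe_list_erase hmem
        rw [hrest, Multiset.range_succ, Multiset.map_cons] at h1
        exact (Multiset.cons_inj_right _).1 h1
      obtain ⟨ih1, ih2⟩ := ih m (by omega) _ herase
      refine ⟨?_, ih2⟩
      rw [← Multiset.cons_coe, ih1]
      rw [Multiset.range_succ (k+1), Multiset.map_cons]

instance : Std.Antisymm (fun x1 x2 : ℤ => x1 ≤ x2) := ⟨fun _ _ h h' => le_antisymm h h'⟩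

lemma filterMap_none' {α β : Type*} (s : Multiset α) :
    Multiset.filterMap (fun _ => (none : Option β)) s = 0 := by
  induction s using Multiset.induction with
  | empty => rfl
  | cons a t ih => rw [Multiset.filterMap_cons_none _ _ rfl]; exact ih

lemma coe_sum_aux (s : Multiset ℕ) :
    (s.map (fun x : ℕ => ({(x:ℤ)} : Multiset ℤ))).sum = s.map (fun x : ℕ => (x:ℤ)) := by
  induction s using Multiset.induction with
  | empty => simp
  | cons a t ih => simp [ih]

lemma simpleMS_eq (b e : ℤ) (n : ℕ) :
    simpleMS b e n = (Multiset.range n).map (fun i : ℕ => ((b + (i:ℤ), e + (i:ℤ)) : Segment)) := by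
  simp only [simpleMS, Bind.bind, Pure.pure, Multiset.bind, Multiset.join, Function.comp]
  rw [coe_sum_aux, Multiset.map_map]
  rfl

lemma mwIter_simple (b e' : ℤ) (k : ℕ) (hbe : b ≤ e') (l : List Segment)
    (hl : (↑l : Multisegment) = simpleMS b e' (k+1)) :
    ∃ (seg : Segment) (l' : List Segment), mwIter l = some (seg, l') ∧
      (↑l' : Multisegment) = if b ≤ e' - 1 then simpleMS b (e'-1) (k+1) else 0 := by
  have hlen : l.length = k + 1 := by
    have := congrArg Multiset.card hl
    simpa [simpleMS_eq] using this
  have hmemf : ∀ i : ℕ, i < k + 1 → ((b + (i:ℤ), e' + (i:ℤ)) : Segment) ∈ l := by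
    intro i hi
    have : ((b + (i:ℤ), e' + (i:ℤ)) : Segment) ∈ (↑l : Multisegment) := by
      rw [hl, simpleMS_eq]
      exact Multiset.mem_map.2 ⟨i, Multiset.mem_range.2 hi, rfl⟩
    exact_mod_cast this
  have hmax : (l.map fun Δ => Δ.2).max? = some (e' + (k:ℤ)) := by
    refine (List.max?_eq_some_iff).2 ⟨?_, ?_⟩
    · exact List.mem_map.2 ⟨_, hmemf k (by omega), rfl⟩
    · intro x hx
      obtain ⟨Δ, hΔ, rfl⟩ := List.mem_map.1 hx
      have : Δ ∈ (↑l : Multisegment) := by exact_mod_cast hΔ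
      rw [hl, simpleMS_eq] at this
      obtain ⟨i, hi, rfl⟩ := Multiset.mem_map.1 this
      rw [Multiset.mem_range] at hi
      push_cast
      omega
  have hps : pickShortest (e' + (k:ℤ)) l = some ((b + (k:ℤ), e' + (k:ℤ)) : Segment) := by
    apply pickShortest_of_singleton
    apply filter_singleton_list
    rw [hl, simpleMS_eq]
    exact filter_map_range_singleton (fun i : ℕ => ((b + (i:ℤ), e' + (i:ℤ)) : Segment))
      _ _ k (by omega) (by
        intro i hi
        simp only [beq_iff_eq]
        constructor
        · intro hp; omega
        · rintro rfl; rfl)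
  have herase : (↑(l.erase ((b + (k:ℤ), e' + (k:ℤ)) : Segment)) : Multisegment)
      = (Multiset.range k).map (fun i : ℕ => ((b + (i:ℤ), e' + (i:ℤ)) : Segment)) := by
    have h1 := coe_list_erase (hmemf k (by omega))
    rw [hl, simpleMS_eq, Multiset.range_succ, Multiset.map_cons] at h1
    exact (Multiset.cons_inj_right _).1 h1
  set P := pickChain l.length ((b + (k:ℤ), e' + (k:ℤ)) : Segment)
      (l.erase ((b + (k:ℤ), e' + (k:ℤ)) : Segment)) with hP
  obtain ⟨hc1, hc2⟩ := pickChain_simple b e' hbe k l.length (by omega) _ herase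
  rw [← hP] at hc1 hc2
  refine ⟨(((b + (k:ℤ), e' + (k:ℤ)) : Segment).2 - ((P.1.length : ℤ) - 1), e' + (k:ℤ)),
    P.2 ++ P.1.filterMap removeEnd, ?_, ?_⟩
  · simp only [mwIter, hmax, hps, ← hP]
  · rw [hc2, List.nil_append]
    have hfm : (↑(P.1.filterMap removeEnd) : Multisegment)
        = Multiset.filterMap removeEnd
          ((Multiset.range (k+1)).map (fun i : ℕ => ((b + (i:ℤ), e' + (i:ℤ)) : Segment))) := by
      rw [← hc1]; rfl
    rw [hfm, Multiset.filterMap_map]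
    by_cases hb : b ≤ e' - 1
    · rw [if_pos hb]
      have hfun : (removeEnd ∘ fun i : ℕ => ((b + (i:ℤ), e' + (i:ℤ)) : Segment))
          = some ∘ (fun i : ℕ => ((b + (i:ℤ), (e'-1) + (i:ℤ)) : Segment)) := by
        funext i
        simp only [Function.comp_apply, removeEnd, if_pos (show b + (i:ℤ) ≤ e' + (i:ℤ) - 1 by omega)]
        congr 2
        ring
      rw [hfun, Multiset.filterMap_eq_map, simpleMS_eq]
    · rw [if_neg hb]
      have hfun : (removeEnd ∘ fun i : ℕ => ((b + (i:ℤ), e' + (i:ℤ)) : Segment))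
          = fun _ => (none : Option Segment) := by
        funext i
        simp only [Function.comp_apply, removeEnd,
          if_neg (show ¬ (b + (i:ℤ) ≤ e' + (i:ℤ) - 1) by omega)]
      rw [hfun, filterMap_none']

lemma mwAux_length_simple (b : ℤ) (k : ℕ) : ∀ (L fuel : ℕ), L ≤ fuel →
    ∀ l : List Segment, ((L = 0 ∧ l = []) ∨
      (1 ≤ L ∧ (↑l : Multisegment) = simpleMS b (b + L - 1) (k+1))) →
    (mwAux fuel l).length = L := by
  intro L
  induction L with
  | zero =>
    intro fuel _ l hl
    rcases hl with ⟨_, rfl⟩ | ⟨h1, _⟩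
    · cases fuel with
      | zero => rfl
      | succ m => rw [mwAux]; rfl
    · omega
  | succ L ih =>
    intro fuel hfuel l hl
    rcases hl with ⟨h0, _⟩ | ⟨_, hl⟩
    · omega
    cases fuel with
    | zero => omega
    | succ m =>
      have hbe : b ≤ b + (L+1:ℕ) - 1 := by push_cast; omega
      obtain ⟨seg, l', hiter, hl'⟩ := mwIter_simple b (b + (L+1:ℕ) - 1) k hbe l hl
      have : mwAux (m+1) l = seg :: mwAux m l' := by simp only [mwAux, hiter]
      rw [this, List.length_cons]
      congr 1
      apply ih m (by omega) l'
      by_cases hL : 1 ≤ L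
      · right
        refine ⟨hL, ?_⟩
        rw [hl', if_pos (by push_cast; omega)]
        congr 1
        push_cast
        ring
      · left
        have hL0 : L = 0 := by omega
        subst hL0
        refine ⟨rfl, ?_⟩
        rw [if_neg (by push_cast; omega)] at hl'
        exact_mod_cast (Multiset.coe_eq_zero _).1 hl'

lemma card_dual_simple (b e : ℤ) (n : ℕ) (hbe : b ≤ e) (hn : 1 ≤ n) :
    Multiset.card (dual (simpleMS b e n)) = (e - b + 1).toNat := by
  obtain ⟨k, rfl⟩ : ∃ k, n = k + 1 := ⟨n - 1, by omega⟩
  have hL1 : 1 ≤ (e - b + 1).toNat := by omega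
  have hLc : ((e - b + 1).toNat : ℤ) = e - b + 1 := by omega
  have hcoe : (↑(simpleMS b e (k+1)).toList : Multisegment) = simpleMS b e (k+1) :=
    Multiset.coe_toList _
  have hm : ((b + ((0:ℕ):ℤ), e + ((0:ℕ):ℤ)) : Segment) ∈ simpleMS b e (k+1) := by
    rw [simpleMS_eq]
    exact Multiset.mem_map.2 ⟨0, Multiset.mem_range.2 (by omega), rfl⟩
  have hfuel : (e - b + 1).toNat ≤ totalSize (simpleMS b e (k+1)).toList := by
    rw [totalSize_eq_TS, hcoe]
    have : ((e + ((0:ℕ):ℤ)) - (b + ((0:ℕ):ℤ)) + 1).toNat ∈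
        (simpleMS b e (k+1)).map (fun Δ => (Δ.2 - Δ.1 + 1).toNat) :=
      Multiset.mem_map.2 ⟨_, hm, rfl⟩
    have h2 := Multiset.single_le_sum (fun x _ => Nat.zero_le x) _ this
    unfold TS
    have : ((e + ((0:ℕ):ℤ)) - (b + ((0:ℕ):ℤ)) + 1).toNat = (e - b + 1).toNat := by
      push_cast; omega
    omega
  have key := mwAux_length_simple b k ((e - b + 1).toNat)
    (totalSize (simpleMS b e (k+1)).toList) hfuel (simpleMS b e (k+1)).toList
    (Or.inr ⟨hL1, by rw [hcoe]; congr 1; omega⟩)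
  unfold dual
  rw [Multiset.coe_card, key]

lemma lmax_le_card_dual {γ : Multisegment} (hv : IsMultisegment γ) :
    Lmax γ ≤ (Multiset.card (dual γ) : ℤ) := by
  unfold dual
  rw [Multiset.coe_card]
  have := lmax_le_mwAux_length (totalSize γ.toList) γ.toList
    (by rw [Multiset.coe_toList]; exact hv) (le_refl _)
  rwa [Multiset.coe_toList] at this

lemma mle_card {γ β : Multisegment} (h : mle γ β) :
    Multiset.card β ≤ Multiset.card γ := by
  induction h with
  | refl => exact le_refl _
  | tail hs hstep ih => exact (move_card hstep).trans ih

lemma IsMultisegment_simple (b e : ℤ) (n : ℕ) (hbe : b ≤ e) :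
    IsMultisegment (simpleMS b e n) := by
  rw [simpleMS_eq]
  intro Δ hΔ
  obtain ⟨i, hi, rfl⟩ := Multiset.mem_map.1 hΔ
  dsimp only
  omega

lemma Qval_simple (b e : ℤ) (n : ℕ) : Qval (simpleMS b e n) = n * (e - b + 1)^2 := by
  rw [simpleMS_eq, Qval, Multiset.map_map]
  rw [Multiset.map_congr rfl (fun i _ => show _ = (e - b + 1)^2 by
    simp only [Function.comp_apply, Segment.len]; ring)]
  rw [Multiset.map_const', Multiset.sum_replicate, Multiset.card_range, nsmul_eq_mul]

lemma Tval_simple (b e : ℤ) (n : ℕ) : Tval (simpleMS b e n) = n * (e - b + 1) := by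
  rw [simpleMS_eq, Tval, Multiset.map_map]
  rw [Multiset.map_congr rfl (fun i _ => show _ = (e - b + 1) by
    simp only [Function.comp_apply, Segment.len]; ring)]
  rw [Multiset.map_const', Multiset.sum_replicate, Multiset.card_range, nsmul_eq_mul]

lemma Qval_le_lmax_mul_tval {β : Multisegment} (hv : IsMultisegment β) :
    Qval β ≤ Lmax β * Tval β := by
  rw [Qval, Tval, ← Multiset.sum_map_mul_left]
  apply Multiset.sum_map_le_sum_map
  intro Δ hΔ
  have h1 : Segment.len Δ ≤ Lmax β := le_Lmax hΔ
  have h2 : 0 ≤ Segment.len Δ := by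
    have := hv Δ hΔ; simp only [Segment.len]; omega
  calc Segment.len Δ ^ 2 = Segment.len Δ * Segment.len Δ := sq (Segment.len Δ)
    _ ≤ Lmax β * Segment.len Δ := mul_le_mul_of_nonneg_right h1 h2

/-- if `α` is simple, `α ≤ β` and `α̃ ≤ β̃`, then `α = β`. -/
theorem stmt10 (b e : ℤ) (n : ℕ) (hbe : b ≤ e) (hn : 1 ≤ n) (β : Multisegment)
    (h1 : mle (simpleMS b e n) β) (h2 : mle (dual (simpleMS b e n)) (dual β)) :
    simpleMS b e n = β := by
  have hvA : IsMultisegment (simpleMS b e n) := IsMultisegment_simple b e n hbe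
  obtain ⟨hvB, hQ, hT, -⟩ := mle_props h1 hvA
  have hcard : Multiset.card (dual β) ≤ (e - b + 1).toNat := by
    rw [← card_dual_simple b e n hbe hn]
    exact mle_card h2
  have hcd : (Multiset.card (dual β) : ℤ) ≤ e - b + 1 := by omega
  have hLβ : Lmax β ≤ e - b + 1 := le_trans (lmax_le_card_dual hvB) hcd
  have hQβ : Qval β ≤ Lmax β * Tval β := Qval_le_lmax_mul_tval hvB
  have hTβ : Tval β = n * (e - b + 1) := by rw [hT, Tval_simple]
  have hTpos : (0 : ℤ) ≤ (n : ℤ) * (e - b + 1) := by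
    have h1' : (0:ℤ) ≤ (n:ℤ) := Int.natCast_nonneg n
    nlinarith
  have hQub : Qval β ≤ (e - b + 1) * ((n : ℤ) * (e - b + 1)) := by
    calc Qval β ≤ Lmax β * Tval β := hQβ
      _ = Lmax β * ((n : ℤ) * (e - b + 1)) := by rw [hTβ]
      _ ≤ (e - b + 1) * ((n : ℤ) * (e - b + 1)) := mul_le_mul_of_nonneg_right hLβ hTpos
  have hQA : Qval (simpleMS b e n) = (n : ℤ) * (e - b + 1)^2 := Qval_simple b e n
  have hbridge : (n : ℤ) * (e - b + 1)^2 = (e - b + 1) * ((n : ℤ) * (e - b + 1)) := by ring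
  exact mle_Q_eq h1 hvA (by linarith [hQ, hQub, hQA, hbridge])
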